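/- Let f : ℕ → ℕ. Suppose that for every domain X' and every binary concept class H ⊆ {0,1}^{X'} with finite VC dimension d, there exists an exact realizable sample compression scheme for H of size at most f(d) that is either a proper compression scheme or a majority vote compression scheme. Then every multiclass concept class C ⊆ Y^X (where the label set Y may be infinite) with finite graph dimension d_G admits an exact realizable sample compression scheme of size at most f(d_G). -/

import Mathlib

lemma countP_add_le' {α : Type*} (L : List α) (p q : α → Bool)
    (h : ∀ a ∈ L, ¬(p a = true ∧ q a = true)) :
    L.countP p + L.countP q ≤ L.length := by
  induction L with
  | nil => simp
  | cons a t ih =>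
    have ht := ih (fun a ha => h a (List.mem_cons_of_mem _ ha))
    have ha := h a List.mem_cons_self
    simp only [List.countP_cons, List.length_cons]
    by_cases hp : p a = true <;> by_cases hq : q a = true <;> simp_all <;> omega

lemma map_fst_true' {α : Type*} (L : List (α × Bool)) (h : ∀ q ∈ L, q.2 = true) :
    (L.map Prod.fst).map (fun a => (a, true)) = L := by
  rw [List.map_map]
  conv_rhs => rw [← List.map_id L]
  refine List.map_congr_left fun q hq => ?_
  have := h q hq
  simp [Function.comp]
  exact Prod.ext rfl this.symm


universe u v

/-- A finite sample `S` is realizable by the concept class `C`. -/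
def Realizable {X Y : Type*} (C : Set (X → Y)) (S : List (X × Y)) : Prop :=
  ∃ c ∈ C, ∀ p ∈ S, c p.1 = p.2

/-- `(κ, ρ)` is an exact realizable sample compression scheme for `C` of size at most `k`. -/
def IsExactRealizableScheme {X Y : Type*} (C : Set (X → Y)) (k : ℕ)
    (κ : List (X × Y) → List (X × Y) × List Bool)
    (ρ : List (X × Y) × List Bool → X → Y) : Prop :=
  (∀ S : List (X × Y), (κ S).1 ⊆ S) ∧
  (∀ S : List (X × Y), Realizable C S → (κ S).1.length + (κ S).2.length ≤ k) ∧
  (∀ S : List (X × Y), Realizable C S → ∀ p ∈ S, ρ (κ S) p.1 = p.2)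

/-- A proper compression scheme: on realizable samples the reconstruction
returns a concept of the class. -/
def IsProperScheme {X Y : Type*} (C : Set (X → Y))
    (κ : List (X × Y) → List (X × Y) × List Bool)
    (ρ : List (X × Y) × List Bool → X → Y) : Prop :=
  ∀ S : List (X × Y), Realizable C S → ρ (κ S) ∈ C

/-- `g` is a majority vote of finitely many (a nonempty finite multiset of) concepts
from the binary class `H`, with ties broken toward `0` (majority is `1` iff strictly
more than half of the concepts output `1`). -/
def IsMajorityOf {X' : Type*} (H : Set (X' → Bool)) (g : X' → Bool) : Prop :=
  ∃ L : List (X' → Bool), L ≠ [] ∧ (∀ h ∈ L, h ∈ H) ∧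
    ∀ x, g x = decide (L.length < 2 * L.countP (fun h => h x))

/-- A majority vote compression scheme for a binary class `H`. -/
def IsMajorityVoteScheme {X' : Type*} (H : Set (X' → Bool))
    (κ : List (X' × Bool) → List (X' × Bool) × List Bool)
    (ρ : List (X' × Bool) × List Bool → X' → Bool) : Prop :=
  ∀ S : List (X' × Bool), Realizable H S → IsMajorityOf H (ρ (κ S))

/-- `n` points of `X` are shattered by the binary concept class `H ⊆ {0,1}^X`. -/
def ShattersN {X : Type*} (H : Set (X → Bool)) (n : ℕ) : Prop :=
  ∃ x : Fin n → X, ∀ b : Fin n → Bool, ∃ h ∈ H, ∀ i, h (x i) = b i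

/-- `H` has (finite) VC dimension exactly `d`. -/
def IsVCDim {X : Type*} (H : Set (X → Bool)) (d : ℕ) : Prop :=
  ShattersN H d ∧ ¬ ShattersN H (d + 1)

/-- `n` points of `X` are G-shattered by the multiclass concept class `C ⊆ Y^X`. -/
def GShattersN {X Y : Type*} (C : Set (X → Y)) (n : ℕ) : Prop :=
  ∃ (x : Fin n → X) (y : Fin n → Y),
    ∀ b : Fin n → Bool, ∃ c ∈ C, ∀ i, (c (x i) = y i ↔ b i = true)

/-- `C` has (finite) graph dimension exactly `d`. -/
def IsGraphDim {X Y : Type*} (C : Set (X → Y)) (d : ℕ) : Prop :=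
  GShattersN C d ∧ ¬ GShattersN C (d + 1)

/-- Multiclass reduction with proper / majority-vote binary compression schemes:
if every binary class of finite VC dimension `d` has an exact realizable compression
scheme of size at most `f d` that is proper or a majority vote scheme, then every
multiclass class (possibly infinite label set) with finite graph dimension `d_G`
admits an exact realizable compression scheme of size at most `f d_G`. -/
theorem multiclass_compression_of_proper_or_majority {X : Type u} {Y : Type v}
    (f : ℕ → ℕ)
    (hbin : ∀ (X' : Type (max u v)) (H : Set (X' → Bool)) (d : ℕ), IsVCDim H d →
      ∃ κ ρ, IsExactRealizableScheme H (f d) κ ρ ∧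
        (IsProperScheme H κ ρ ∨ IsMajorityVoteScheme H κ ρ))
    (C : Set (X → Y)) (dG : ℕ) (hC : IsGraphDim C dG) :
    ∃ κ ρ, IsExactRealizableScheme C (f dG) κ ρ := by
  classical
  -- the graph class
  set H : Set ((X × Y) → Bool) := {h | ∃ c ∈ C, h = fun p => decide (c p.1 = p.2)} with hH
  -- VC dimension of H equals graph dimension of C
  have key : ∀ n, ShattersN H n ↔ GShattersN C n := by
    intro n
    constructor
    · rintro ⟨p, hp⟩
      refine ⟨fun i => (p i).1, fun i => (p i).2, fun b => ?_⟩
      obtain ⟨h, ⟨c, hcC, rfl⟩, hh⟩ := hp b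
      refine ⟨c, hcC, fun i => ?_⟩
      rw [← hh i]
      simp
    · rintro ⟨x, y, hxy⟩
      refine ⟨fun i => (x i, y i), fun b => ?_⟩
      obtain ⟨c, hcC, hc⟩ := hxy b
      refine ⟨_, ⟨c, hcC, rfl⟩, fun i => ?_⟩
      have := hc i
      cases hbi : b i <;> simp_all
  have hVC : IsVCDim H dG := ⟨(key dG).2 hC.1, fun hs => hC.2 ((key (dG + 1)).1 hs)⟩
  obtain ⟨κ', ρ', ⟨hsub, hsize, hexact⟩, halt⟩ := hbin (X × Y) H dG hVC
  -- C is nonempty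
  obtain ⟨x0, y0, hb0⟩ := hC.1
  obtain ⟨c₀, hc₀, -⟩ := hb0 (fun _ => true)
  -- the binarized sample
  set lift : List (X × Y) → List ((X × Y) × Bool) := fun S => S.map (fun p => (p, true))
    with hlift
  have hreal : ∀ S : List (X × Y), Realizable C S → Realizable H (lift S) := by
    rintro S ⟨c, hcC, hc⟩
    refine ⟨fun p => decide (c p.1 = p.2), ⟨c, hcC, rfl⟩, ?_⟩
    rintro q hq
    simp only [hlift, List.mem_map] at hq
    obtain ⟨p, hp, rfl⟩ := hq
    simp [hc p hp]
  -- the multiclass scheme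
  refine ⟨fun S => (((κ' (lift S)).1.map Prod.fst), (κ' (lift S)).2),
    fun T x => if h : ∃ y, ρ' (T.1.map (fun p => (p, true)), T.2) (x, y) = true
      then h.choose else c₀ x, ?_, ?_, ?_⟩
  · -- subsequence
    intro S a ha
    simp only [List.mem_map] at ha
    obtain ⟨q, hq, rfl⟩ := ha
    have := hsub (lift S) hq
    simp only [hlift, List.mem_map] at this
    obtain ⟨p, hp, rfl⟩ := this
    exact hp
  · -- size
    intro S hS
    have := hsize (lift S) (hreal S hS)
    simpa using this
  · -- exactness
    rintro S hS ⟨x, y⟩ hp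
    have hRS := hreal S hS
    -- the reconstructed hypothesis equals the binary reconstruction
    have hsnd : ∀ q ∈ (κ' (lift S)).1, q.2 = true := by
      intro q hq
      have := hsub (lift S) hq
      simp only [hlift, List.mem_map] at this
      obtain ⟨p, -, rfl⟩ := this
      rfl
    have hroundtrip : (((κ' (lift S)).1.map Prod.fst).map (fun a => (a, true)),
        (κ' (lift S)).2) = κ' (lift S) := by
      simp only [map_fst_true' _ hsnd]
    set g : (X × Y) → Bool := ρ' (κ' (lift S)) with hg
    -- g is true on sample points
    have hgxy : g (x, y) = true := by
      have := hexact (lift S) hRS ((x, y), true) (by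
        simp only [hlift, List.mem_map]; exact ⟨(x, y), hp, rfl⟩)
      simpa using this
    -- uniqueness of the label
    have huniq : ∀ y₁ y₂ : Y, g (x, y₁) = true → g (x, y₂) = true → y₁ = y₂ := by
      intro y₁ y₂ h1 h2
      by_contra hne
      rcases halt with hprop | hmaj
      · obtain ⟨c, -, hcg⟩ := hprop (lift S) hRS
        rw [hg, hcg] at h1 h2
        simp only [decide_eq_true_eq] at h1 h2
        exact hne (h1 ▸ h2 ▸ rfl)
      · obtain ⟨L, hLne, hLH, hLmaj⟩ := hmaj (lift S) hRS
        have h1' := hLmaj (x, y₁)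
        have h2' := hLmaj (x, y₂)
        rw [← hg] at h1' h2'
        rw [h1, eq_comm, decide_eq_true_eq] at h1'
        rw [h2, eq_comm, decide_eq_true_eq] at h2'
        have hdisj : ∀ h ∈ L, ¬((fun h => h (x, y₁)) h = true ∧
            (fun h => h (x, y₂)) h = true) := by
          intro h hhL ⟨ha, hb⟩
          obtain ⟨c, -, rfl⟩ := hLH h hhL
          simp only [decide_eq_true_eq] at ha hb
          exact hne (ha ▸ hb ▸ rfl)
        have hle := countP_add_le' L (fun h => h (x, y₁)) (fun h => h (x, y₂)) hdisj
        generalize L.countP (fun h => h (x, y₁)) = p1 at h1' hle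
        generalize L.countP (fun h => h (x, y₂)) = p2 at h2' hle
        omega
    -- conclude
    show (if h : ∃ y', ρ' (((κ' (lift S)).1.map Prod.fst).map (fun p => (p, true)),
        (κ' (lift S)).2) (x, y') = true then h.choose else c₀ x) = y
    simp only [map_fst_true' _ hsnd]
    have hex : ∃ y', g (x, y') = true := ⟨y, hgxy⟩
    rw [dif_pos hex]
    exact huniq _ _ hex.choose_spec hgxy
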